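/- arXiv:2209.01679 — 7 statements merged into one kernel-verified Lean document; each statement's English description precedes it below -/
import Mathlib

section
/- (Planar version of the symmetric-inertia points) Let a system of non-collinear points with positive masses be given in the plane, with center of masses C at the origin, principal axes along the coordinate axes (i.e., Σ mⱼ xⱼ yⱼ = 0), and principal axial moments I_x = Σ mⱼ yⱼ², I_y = Σ mⱼ xⱼ² with I_x > I_y. Set d̂ = √((I_x - I_y)/m) with m the total mass. Then at each of the two points F₁ = (d̂, 0) and F₂ = (-d̂, 0), the moment of inertia of the system about every line through that point is the same, equal to I_x. -/
open scoped BigOperators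

lemma infDist_line_sq (F v x : EuclideanSpace ℝ (Fin 2))
    (hv : 0 < v 0 ^ 2 + v 1 ^ 2) :
    Metric.infDist x {p | ∃ t : ℝ, p = F + t • v} ^ 2
      = (v 1 * (x 0 - F 0) - v 0 * (x 1 - F 1)) ^ 2 / (v 0 ^ 2 + v 1 ^ 2) := by
  set a := v 0; set b := v 1
  set c : ℝ := (b * (x 0 - F 0) - a * (x 1 - F 1)) ^ 2 / (a ^ 2 + b ^ 2) with hc
  have hc0 : 0 ≤ c := div_nonneg (sq_nonneg _) hv.le
  set S : Set (EuclideanSpace ℝ (Fin 2)) := {p | ∃ t : ℝ, p = F + t • v} with hS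
  have hne : S.Nonempty := ⟨F + (0:ℝ) • v, ⟨0, rfl⟩⟩
  have hdist : ∀ t : ℝ, dist x (F + t • v)
      = Real.sqrt ((x 0 - (F 0 + t * a)) ^ 2 + (x 1 - (F 1 + t * b)) ^ 2) := by
    intro t
    rw [EuclideanSpace.dist_eq, Fin.sum_univ_two]
    simp [PiLp.add_apply, PiLp.smul_apply, smul_eq_mul, dist_eq_norm, Real.norm_eq_abs,
      sq_abs, a, b]
  have key : Metric.infDist x S = Real.sqrt c := by
    apply le_antisymm
    · set t₀ : ℝ := (a * (x 0 - F 0) + b * (x 1 - F 1)) / (a ^ 2 + b ^ 2) with ht₀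
      have hmem : F + t₀ • v ∈ S := ⟨t₀, rfl⟩
      have := Metric.infDist_le_dist_of_mem (x := x) hmem
      rw [hdist t₀] at this
      convert this using 2
      · rfl
      rw [hc, ht₀]
      field_simp
      ring
    · refine le_of_not_gt fun h => ?_
      rw [Metric.infDist_lt_iff hne] at h
      obtain ⟨y, hy, hlt⟩ := h
      obtain ⟨t, rfl⟩ := hy
      rw [hdist t] at hlt
      refine absurd hlt (not_lt.mpr (Real.sqrt_le_sqrt ?_))
      rw [hc, div_le_iff₀ hv]
      nlinarith [sq_nonneg (a * (x 0 - F 0) + b * (x 1 - F 1) - t * (a ^ 2 + b ^ 2))]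
  rw [key, Real.sq_sqrt hc0]

/-- Planar symmetric-inertia points: at each of `F₁ = (d̂, 0)` and `F₂ = (-d̂, 0)`
with `d̂ = √((I_x - I_y)/m)`, the moment of inertia about every line through that
point equals `I_x`. -/
theorem planar_symmetric_inertia_points
    (N : ℕ) (M : Fin N → EuclideanSpace ℝ (Fin 2)) (mass : Fin N → ℝ)
    (hmass : ∀ j, 0 < mass j)
    (hnoncol : ¬ ∃ a b c : ℝ, (a, b) ≠ (0, 0) ∧ ∀ j, a * M j 0 + b * M j 1 = c)
    (hcx : ∑ j, mass j * M j 0 = 0) (hcy : ∑ j, mass j * M j 1 = 0)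
    (hprin : ∑ j, mass j * (M j 0 * M j 1) = 0)
    (m Ix Iy : ℝ) (hm : m = ∑ j, mass j)
    (hIx : Ix = ∑ j, mass j * (M j 1) ^ 2) (hIy : Iy = ∑ j, mass j * (M j 0) ^ 2)
    (hIlt : Iy < Ix)
    (F₁ F₂ : EuclideanSpace ℝ (Fin 2))
    (hF₁0 : F₁ 0 = Real.sqrt ((Ix - Iy) / m)) (hF₁1 : F₁ 1 = 0)
    (hF₂0 : F₂ 0 = -Real.sqrt ((Ix - Iy) / m)) (hF₂1 : F₂ 1 = 0) :
    ∀ v : EuclideanSpace ℝ (Fin 2), v ≠ 0 →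
      (∑ j, mass j * (Metric.infDist (M j) {p | ∃ t : ℝ, p = F₁ + t • v}) ^ 2 = Ix ∧
       ∑ j, mass j * (Metric.infDist (M j) {p | ∃ t : ℝ, p = F₂ + t • v}) ^ 2 = Ix) := by
  intro v hv
  -- positivity of m
  have hN : 0 < N := by
    rcases Nat.eq_zero_or_pos N with h0 | h
    · subst h0
      simp at hIx hIy
      linarith
    · exact h
  have hm0 : 0 < m := by
    rw [hm]
    have : Nonempty (Fin N) := Fin.pos_iff_nonempty.mp hN
    exact Finset.sum_pos (fun j _ => hmass j) Finset.univ_nonempty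
  have hd2 : Real.sqrt ((Ix - Iy) / m) ^ 2 * m = Ix - Iy := by
    rw [Real.sq_sqrt (div_nonneg (by linarith) hm0.le)]
    field_simp
  set a := v 0; set b := v 1
  have hab : 0 < a ^ 2 + b ^ 2 := by
    have : a ≠ 0 ∨ b ≠ 0 := by
      by_contra h
      push_neg at h
      apply hv
      ext i
      fin_cases i
      · exact h.1
      · exact h.2
    rcases this with h | h
    · positivity
    · positivity
  have key : ∀ f : ℝ, f ^ 2 * m = Ix - Iy →
      ∑ j, mass j * ((b * (M j 0 - f) - a * (M j 1 - 0)) ^ 2 / (a ^ 2 + b ^ 2)) = Ix := by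
    intro f hf
    have expand : ∀ j, mass j * ((b * (M j 0 - f) - a * (M j 1 - 0)) ^ 2 / (a ^ 2 + b ^ 2))
        = (b ^ 2 * (mass j * (M j 0) ^ 2) + (f ^ 2 * b ^ 2) * mass j
            + a ^ 2 * (mass j * (M j 1) ^ 2)
            - 2 * b ^ 2 * f * (mass j * M j 0) + 2 * a * b * f * (mass j * M j 1)
            - 2 * a * b * (mass j * (M j 0 * M j 1))) / (a ^ 2 + b ^ 2) := by
      intro j; rw [mul_div_assoc', div_eq_div_iff hab.ne' hab.ne']; ring
    rw [Finset.sum_congr rfl fun j _ => expand j, ← Finset.sum_div]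
    rw [div_eq_iff hab.ne']
    have : ∑ j, (b ^ 2 * (mass j * (M j 0) ^ 2) + (f ^ 2 * b ^ 2) * mass j
            + a ^ 2 * (mass j * (M j 1) ^ 2)
            - 2 * b ^ 2 * f * (mass j * M j 0) + 2 * a * b * f * (mass j * M j 1)
            - 2 * a * b * (mass j * (M j 0 * M j 1)))
        = b ^ 2 * (∑ j, mass j * (M j 0) ^ 2) + (f ^ 2 * b ^ 2) * (∑ j, mass j)
          + a ^ 2 * (∑ j, mass j * (M j 1) ^ 2)
          - 2 * b ^ 2 * f * (∑ j, mass j * M j 0) + 2 * a * b * f * (∑ j, mass j * M j 1)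
          - 2 * a * b * (∑ j, mass j * (M j 0 * M j 1)) := by
      simp [Finset.sum_add_distrib, Finset.sum_sub_distrib, Finset.mul_sum]
    rw [this, ← hIy, ← hIx, ← hm, hcx, hcy, hprin]
    nlinarith [hf]
  constructor
  · have := key (F₁ 0) (by rw [hF₁0]; exact hd2)
    rw [← this]
    refine Finset.sum_congr rfl fun j _ => ?_
    rw [infDist_line_sq F₁ v (M j) hab, hF₁1]
  · have := key (F₂ 0) (by rw [hF₂0]; rw [neg_pow]; simpa using hd2)
    rw [← this]
    refine Finset.sum_congr rfl fun j _ => ?_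
    rw [infDist_line_sq F₂ v (M j) hab, hF₂1]
end

section
/- Let a system of points with positive masses be given in the plane with center of masses at the origin, principal axes along the coordinate axes, principal axial moments I_x > I_y, and total mass m. For any line ℓ in the plane, the axial moment of inertia satisfies I_ℓ = I_x + m·d₁·d₂', where d₁ and d₂ are the distances from the points F₁ = (√((I_x−I_y)/m), 0) and F₂ = (−√((I_x−I_y)/m), 0) to ℓ, taken with opposite signs if F₁ and F₂ are on opposite sides of ℓ (i.e., d₁·d₂' is the product of signed distances). -/
open scoped BigOperators

/-- For a planar system in principal central coordinates with `I_y < I_x`, the axial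
moment about any line `{p : n₁x + n₂y = c}` (unit normal) equals
`I_x + m · d₁ · d₂'`, the product of the signed distances from
`F₁ = (d̂, 0)` and `F₂ = (-d̂, 0)` to the line, where `d̂ = √((I_x - I_y)/m)`. -/
theorem axial_moment_eq_Ix_add_signed_dist_prod
    (N : ℕ) (x y mass : Fin N → ℝ)
    (hmass : ∀ j, 0 < mass j)
    (hcx : ∑ j, mass j * x j = 0) (hcy : ∑ j, mass j * y j = 0)
    (hprin : ∑ j, mass j * (x j * y j) = 0)
    (m Ix Iy : ℝ) (hm : m = ∑ j, mass j)
    (hIx : Ix = ∑ j, mass j * (y j) ^ 2) (hIy : Iy = ∑ j, mass j * (x j) ^ 2)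
    (hIlt : Iy < Ix)
    (dhat : ℝ) (hdhat : dhat = Real.sqrt ((Ix - Iy) / m))
    (n₁ n₂ c : ℝ) (hn : n₁ ^ 2 + n₂ ^ 2 = 1) :
    ∑ j, mass j * (n₁ * x j + n₂ * y j - c) ^ 2 =
      Ix + m * ((n₁ * dhat + n₂ * 0 - c) * (n₁ * (-dhat) + n₂ * 0 - c)) := by
  have hN : 0 < N := by
    by_contra h
    have hN0 : N = 0 := by omega
    subst hN0
    simp [Finset.univ_eq_empty] at hIx hIy
    linarith
  have hm0 : 0 < m := by
    rw [hm]
    exact Finset.sum_pos (fun j _ => hmass j) ⟨⟨0, hN⟩, Finset.mem_univ _⟩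
  have hd2 : dhat ^ 2 = (Ix - Iy) / m := by
    rw [hdhat, sq, Real.mul_self_sqrt]
    apply div_nonneg (by linarith) hm0.le
  have key : ∑ j, mass j * (n₁ * x j + n₂ * y j - c) ^ 2 =
      n₁ ^ 2 * (∑ j, mass j * (x j) ^ 2) + n₂ ^ 2 * (∑ j, mass j * (y j) ^ 2)
      + c ^ 2 * (∑ j, mass j) + 2 * n₁ * n₂ * (∑ j, mass j * (x j * y j))
      - 2 * n₁ * c * (∑ j, mass j * x j) - 2 * n₂ * c * (∑ j, mass j * y j) := by
    simp only [Finset.mul_sum, ← Finset.sum_add_distrib, ← Finset.sum_sub_distrib]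
    exact Finset.sum_congr rfl fun j _ => by ring
  rw [key, hcx, hcy, hprin, ← hm, ← hIx, ← hIy]
  have : n₂ ^ 2 = 1 - n₁ ^ 2 := by linarith
  rw [this]
  have hmd : m * dhat ^ 2 = Ix - Iy := by
    rw [hd2]; field_simp
  nlinarith [hmd]
end

section
/- (Theorem: envelope of hyperplanes with equal hyperplanar moment) Let points in ℝ^k with positive masses, total mass m, center of masses at the origin, principal hyperplanar moments 0 < J₁ < J₂ < … < J_k (so Σⱼ mⱼ x_{ji} x_{jl} = 0 for i ≠ l and J_i = Σⱼ mⱼ x_{ji}²). Define a_i² = (J_i − J₁)/m for i = 2,…,k and a₁ = 0. Then any hyperplane tangent to the quadric x₁²/A² + x₂²/(A² − a₂²) + … + x_k²/(A² − a_k²) = 1 (for a parameter A with A² ≠ a_i² for all i) has hyperplanar moment of inertia equal to J₁ + m·A². -/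
open scoped BigOperators RealInnerProductSpace

theorem my_infDist_hyperplane {E : Type*} [NormedAddCommGroup E] [InnerProductSpace ℝ E]
    (v : E) (hv : v ≠ 0) (c : ℝ) (y : E) :
    Metric.infDist y {p : E | ⟪v, p⟫ = c} = |⟪v, y⟫ - c| / ‖v‖ := by
  have hvn : (0:ℝ) < ‖v‖ := norm_pos_iff.mpr hv
  set S : Set E := {p : E | ⟪v, p⟫ = c} with hS
  set p₀ : E := y - ((⟪v, y⟫ - c) / ‖v‖ ^ 2) • v with hp₀def
  have hp₀ : p₀ ∈ S := by
    simp only [hS, Set.mem_setOf_eq, hp₀def, inner_sub_right, inner_smul_right,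
      real_inner_self_eq_norm_sq]
    field_simp
    ring
  have hnorm : ‖y - p₀‖ = |⟪v, y⟫ - c| / ‖v‖ := by
    have h1 : y - p₀ = ((⟪v, y⟫ - c) / ‖v‖ ^ 2) • v := by
      rw [hp₀def]; abel
    rw [h1, norm_smul, Real.norm_eq_abs, abs_div,
      abs_of_nonneg (by positivity : (0:ℝ) ≤ ‖v‖ ^ 2)]
    field_simp
  apply le_antisymm
  · refine le_trans (Metric.infDist_le_dist_of_mem hp₀) ?_
    rw [dist_eq_norm, hnorm]
  · by_contra hlt
    push_neg at hlt
    obtain ⟨p, hp, hdp⟩ := (Metric.infDist_lt_iff ⟨p₀, hp₀⟩).mp hlt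
    have hin : ⟪v, y⟫ - c = ⟪v, y - p⟫ := by
      rw [inner_sub_right, hp]
    have hb : |⟪v, y⟫ - c| ≤ ‖v‖ * ‖y - p‖ := by
      rw [hin]; exact abs_real_inner_le_norm v (y - p)
    rw [dist_eq_norm] at hdp
    have : |⟪v, y⟫ - c| / ‖v‖ ≤ ‖y - p‖ := by
      rw [div_le_iff₀ hvn]; linarith
    linarith

/-- Envelope of hyperplanes with equal hyperplanar moment: in principal central
coordinates with `0 < J₁ < … < J_k` and `aᵢ² = (Jᵢ - J₁)/m`, every hyperplane
tangent to the quadric `∑ᵢ xᵢ²/(A² - aᵢ²) = 1` has hyperplanar moment of inertia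
equal to `J₁ + m·A²`. -/
theorem envelope_equal_hyperplanar_moment
    (k N : ℕ) (hk : 0 < k)
    (M : Fin N → EuclideanSpace ℝ (Fin k)) (mass : Fin N → ℝ)
    (hmass : ∀ j, 0 < mass j)
    (m : ℝ) (hm : m = ∑ j, mass j)
    (hcenter : ∀ i : Fin k, ∑ j, mass j * M j i = 0)
    (hprin : ∀ i l : Fin k, i ≠ l → ∑ j, mass j * (M j i * M j l) = 0)
    (J : Fin k → ℝ) (hJ : ∀ i, J i = ∑ j, mass j * (M j i) ^ 2)
    (hJpos : ∀ i, 0 < J i) (hJmono : StrictMono J)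
    (asq : Fin k → ℝ) (hasq : ∀ i, asq i = (J i - J ⟨0, hk⟩) / m)
    (A : ℝ) (hA : ∀ i, A ^ 2 ≠ asq i)
    (x₀ : Fin k → ℝ) (hx₀ : ∑ i, (x₀ i) ^ 2 / (A ^ 2 - asq i) = 1)
    (π : Set (EuclideanSpace ℝ (Fin k)))
    (hπ : π = {p : EuclideanSpace ℝ (Fin k) | ∑ i, p i * x₀ i / (A ^ 2 - asq i) = 1}) :
    ∑ j, mass j * (Metric.infDist (M j) π) ^ 2 = J ⟨0, hk⟩ + m * A ^ 2 := by
  classical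
  have hD : ∀ i, A ^ 2 - asq i ≠ 0 := fun i => sub_ne_zero.mpr (hA i)
  -- total mass positive
  have hN : N ≠ 0 := by
    intro h
    subst h
    have := hJpos ⟨0, hk⟩
    rw [hJ ⟨0, hk⟩] at this
    simp at this
  haveI : Nonempty (Fin N) := ⟨⟨0, Nat.pos_of_ne_zero hN⟩⟩
  have hmpos : 0 < m := by
    rw [hm]
    exact Finset.sum_pos (fun j _ => hmass j) Finset.univ_nonempty
  -- the normal vector
  set v : EuclideanSpace ℝ (Fin k) := WithLp.toLp 2 (fun i => x₀ i / (A ^ 2 - asq i)) with hv_def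
  have hvi : ∀ i : Fin k, v i = x₀ i / (A ^ 2 - asq i) := fun i => rfl
  have hinner : ∀ p : EuclideanSpace ℝ (Fin k), ⟪v, p⟫ = ∑ i, p i * x₀ i / (A ^ 2 - asq i) := by
    intro p
    rw [PiLp.inner_apply]
    refine Finset.sum_congr rfl fun i _ => ?_
    simp only [RCLike.inner_apply, conj_trivial, hvi]
    ring
  have hπ' : π = {p : EuclideanSpace ℝ (Fin k) | ⟪v, p⟫ = 1} := by
    rw [hπ]
    ext p
    simp only [Set.mem_setOf_eq, hinner]
  have hv0 : v ≠ 0 := by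
    intro h
    have hx0 : ∀ i, x₀ i = 0 := by
      intro i
      have : v i = 0 := by rw [h]; rfl
      rw [hvi] at this
      exact (div_eq_zero_iff.mp this).resolve_right (hD i)
    rw [Finset.sum_eq_zero (fun i _ => by rw [hx0 i]; simp)] at hx₀
    norm_num at hx₀
  have hVpos : (0:ℝ) < ∑ i, v i ^ 2 := by
    have : ‖v‖ ^ 2 = ∑ i, v i ^ 2 := by
      rw [← real_inner_self_eq_norm_sq, PiLp.inner_apply]
      refine Finset.sum_congr rfl fun i _ => ?_
      simp only [RCLike.inner_apply, conj_trivial]; ring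
    rw [← this]
    exact pow_pos (norm_pos_iff.mpr hv0) 2
  set V : ℝ := ∑ i, v i ^ 2 with hV_def
  have hnormv : ‖v‖ ^ 2 = V := by
    rw [← real_inner_self_eq_norm_sq, PiLp.inner_apply, hV_def]
    refine Finset.sum_congr rfl fun i _ => ?_
    simp only [RCLike.inner_apply, conj_trivial]; ring
  -- distance formula
  have hdist : ∀ j, Metric.infDist (M j) π = |⟪v, M j⟫ - 1| / ‖v‖ := by
    intro j
    rw [hπ', my_infDist_hyperplane v hv0 1 (M j)]
  -- abbreviation
  set T : Fin N → ℝ := fun j => ∑ i, v i * M j i with hT_def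
  have hTinner : ∀ j, ⟪v, M j⟫ = T j := by
    intro j
    rw [PiLp.inner_apply, hT_def]
    refine Finset.sum_congr rfl fun i _ => ?_
    simp only [RCLike.inner_apply, conj_trivial]
    ring
  -- key sum 1 : quadratic
  have hq : ∑ j, mass j * T j ^ 2 = ∑ i, v i ^ 2 * J i := by
    have step : ∀ j, mass j * T j ^ 2
        = ∑ i, ∑ l, v i * v l * (mass j * (M j i * M j l)) := by
      intro j
      have hsq : T j ^ 2 = ∑ i, ∑ l, (v i * M j i) * (v l * M j l) := by
        rw [sq, hT_def, Finset.sum_mul_sum]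
      rw [hsq, Finset.mul_sum]
      refine Finset.sum_congr rfl fun i _ => ?_
      rw [Finset.mul_sum]
      exact Finset.sum_congr rfl fun l _ => by ring
    calc ∑ j, mass j * T j ^ 2
        = ∑ j, ∑ i, ∑ l, v i * v l * (mass j * (M j i * M j l)) :=
          Finset.sum_congr rfl fun j _ => step j
      _ = ∑ i, ∑ l, ∑ j, v i * v l * (mass j * (M j i * M j l)) := by
          rw [Finset.sum_comm]
          exact Finset.sum_congr rfl fun i _ => Finset.sum_comm
      _ = ∑ i, ∑ l, v i * v l * ∑ j, mass j * (M j i * M j l) := by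
          refine Finset.sum_congr rfl fun i _ => Finset.sum_congr rfl fun l _ => ?_
          rw [Finset.mul_sum]
      _ = ∑ i, v i ^ 2 * J i := by
          refine Finset.sum_congr rfl fun i _ => ?_
          rw [Finset.sum_eq_single i]
          · rw [hJ i]
            have : ∑ j, mass j * (M j i * M j i) = ∑ j, mass j * M j i ^ 2 :=
              Finset.sum_congr rfl fun j _ => by ring
            rw [this]; ring
          · intro l _ hl
            rw [hprin i l (Ne.symm hl)]; ring
          · intro h; exact absurd (Finset.mem_univ i) h
  -- key sum 2 : linear
  have hlin : ∑ j, mass j * T j = 0 := by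
    have step : ∀ j, mass j * T j = ∑ i, v i * (mass j * M j i) := by
      intro j
      rw [hT_def, Finset.mul_sum]
      exact Finset.sum_congr rfl fun i _ => by ring
    calc ∑ j, mass j * T j = ∑ j, ∑ i, v i * (mass j * M j i) :=
          Finset.sum_congr rfl fun j _ => step j
      _ = ∑ i, v i * ∑ j, mass j * M j i := by
          rw [Finset.sum_comm]
          exact Finset.sum_congr rfl fun i _ => (Finset.mul_sum _ _ _).symm
      _ = 0 := by simp [hcenter]
  -- total: numerator
  have hnum : ∑ j, mass j * (T j - 1) ^ 2 = ∑ i, v i ^ 2 * J i + m := by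
    have : ∀ j, mass j * (T j - 1) ^ 2
        = mass j * T j ^ 2 - 2 * (mass j * T j) + mass j := fun j => by ring
    rw [Finset.sum_congr rfl fun j _ => this j, Finset.sum_add_distrib,
      Finset.sum_sub_distrib, ← Finset.mul_sum, hq, hlin, hm]
    ring
  -- relation between J and asq
  have hJasq : ∀ i, J i = J ⟨0, hk⟩ + m * asq i := by
    intro i
    rw [hasq i]
    field_simp
    ring
  -- tangency relation
  have htan : ∑ i, v i ^ 2 * (A ^ 2 - asq i) = 1 := by
    rw [← hx₀]
    refine Finset.sum_congr rfl fun i _ => ?_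
    rw [hvi i, div_pow, pow_two (A ^ 2 - asq i), ← div_div,
      div_mul_cancel₀ _ (hD i)]
  -- final numerator identity
  have hfinal : ∑ i, v i ^ 2 * J i + m = (J ⟨0, hk⟩ + m * A ^ 2) * V := by
    have h1 : ∑ i, v i ^ 2 * J i
        = ∑ i, (J ⟨0, hk⟩ * v i ^ 2 + m * (v i ^ 2 * A ^ 2 - v i ^ 2 * (A ^ 2 - asq i))) := by
      refine Finset.sum_congr rfl fun i _ => ?_
      rw [hJasq i]; ring
    rw [h1]
    simp only [Finset.sum_add_distrib, Finset.sum_sub_distrib, ← Finset.mul_sum]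
    rw [htan, hV_def]
    rw [show ∑ i, v i ^ 2 * A ^ 2 = (∑ i, v i ^ 2) * A ^ 2 from (Finset.sum_mul _ _ _).symm]
    ring
  -- put everything together
  calc ∑ j, mass j * Metric.infDist (M j) π ^ 2
      = ∑ j, mass j * (T j - 1) ^ 2 / V := by
        refine Finset.sum_congr rfl fun j _ => ?_
        rw [hdist j, hTinner j, div_pow, sq_abs, hnormv]
        ring
    _ = (∑ j, mass j * (T j - 1) ^ 2) / V := (Finset.sum_div _ _ _).symm
    _ = ((J ⟨0, hk⟩ + m * A ^ 2) * V) / V := by rw [hnum, hfinal]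
    _ = J ⟨0, hk⟩ + m * A ^ 2 := mul_div_cancel_right₀ _ (ne_of_gt hVpos)
end

section
/- With notation as in the envelope theorem, for a hyperplane tangent at point (x₁₀,…,x_{k0}) to the quadric Σᵢ xᵢ²/(A² − aᵢ²) = 1 (a₁ = 0), the quantity S = d² + Σᵢ aᵢ² nᵢ² − a_k² equals A² − a_k², where n is the unit normal to the tangent hyperplane and d = 1/Δ is its distance to the origin, with Δ² = Σᵢ x_{i0}²/(A² − aᵢ²)². -/
open scoped BigOperators

/-- Algebraic identity behind the envelope theorem: for a point `x₀` on the quadric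
`∑ᵢ x₀ᵢ²/(A² - aᵢ²) = 1` with unit normal `nᵢ = x₀ᵢ/((A² - aᵢ²)Δ)` and distance
`d = 1/Δ` of the tangent hyperplane to the origin, one has `d² + ∑ᵢ aᵢ²nᵢ² = A²`
(equivalently `S = d² + ∑ᵢ aᵢ²nᵢ² - a_k² = A² - a_k²`). -/
theorem tangent_hyperplane_S_identity
    (k : ℕ) (hk : 0 < k)
    (asq : Fin k → ℝ) (hasq0 : asq ⟨0, hk⟩ = 0) (hasqmono : StrictMono asq)
    (A : ℝ) (hA : ∀ i, A ^ 2 ≠ asq i)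
    (x₀ : Fin k → ℝ) (hx₀ : ∑ i, (x₀ i) ^ 2 / (A ^ 2 - asq i) = 1)
    (Δ : ℝ) (hΔpos : 0 < Δ)
    (hΔ : Δ ^ 2 = ∑ i, (x₀ i) ^ 2 / (A ^ 2 - asq i) ^ 2)
    (n : Fin k → ℝ) (hn : ∀ i, n i = x₀ i / ((A ^ 2 - asq i) * Δ))
    (d : ℝ) (hd : d = 1 / Δ) :
    d ^ 2 + ∑ i, asq i * (n i) ^ 2 = A ^ 2 := by
  have hΔne : Δ ≠ 0 := ne_of_gt hΔpos
  have key : ∀ i, asq i * (n i) ^ 2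
      = (A ^ 2 * ((x₀ i) ^ 2 / (A ^ 2 - asq i) ^ 2) - (x₀ i) ^ 2 / (A ^ 2 - asq i)) / Δ ^ 2 := by
    intro i
    have h : A ^ 2 - asq i ≠ 0 := sub_ne_zero.mpr (hA i)
    rw [hn i]
    field_simp
    ring
  rw [Finset.sum_congr rfl (fun i _ => key i), ← Finset.sum_div,
    Finset.sum_sub_distrib, ← Finset.mul_sum, ← hΔ, hx₀, hd]
  field_simp
  ring
end

section
/- (Pearson, hyperplane of best fit) Let points M₁,…,M_N in ℝ^k with positive masses, center of masses at the origin, and hyperplanar inertia operator J (the k×k symmetric positive-definite matrix with entries J_{il} = Σⱼ mⱼ x_{ji} x_{jl}). Among all hyperplanes in ℝ^k, the minimal possible hyperplanar moment of inertia J_π = Σⱼ mⱼ dist(Mⱼ, π)² equals the smallest eigenvalue of J, and it is attained by the hyperplane through the origin orthogonal to a corresponding eigenvector. -/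
open scoped BigOperators RealInnerProductSpace

lemma pearson_infDist_hyperplane {k : ℕ} (x n' : EuclideanSpace ℝ (Fin k)) (c : ℝ)
    (hn' : ‖n'‖ = 1) :
    Metric.infDist x {p : EuclideanSpace ℝ (Fin k) | ⟪p, n'⟫ = c} = |⟪x, n'⟫ - c| := by
  have hnn : ⟪n', n'⟫ = 1 := by
    rw [real_inner_self_eq_norm_sq, hn']; norm_num
  set S := {p : EuclideanSpace ℝ (Fin k) | ⟪p, n'⟫ = c} with hS
  set p0 : EuclideanSpace ℝ (Fin k) := x - (⟪x, n'⟫ - c) • n' with hp0def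
  have hp0 : p0 ∈ S := by
    simp only [hS, Set.mem_setOf_eq, hp0def, inner_sub_left, real_inner_smul_left, hnn]
    ring
  apply le_antisymm
  · calc Metric.infDist x S ≤ dist x p0 := Metric.infDist_le_dist_of_mem hp0
      _ = |⟪x, n'⟫ - c| := by
        rw [dist_eq_norm]
        have : x - p0 = (⟪x, n'⟫ - c) • n' := by simp [hp0def]
        rw [this, norm_smul, hn']
        simp
  · refine le_of_not_gt fun h => ?_
    obtain ⟨y, hy, hlt⟩ := (Metric.infDist_lt_iff ⟨p0, hp0⟩).mp h
    have hy' : ⟪y, n'⟫ = c := hy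
    refine absurd hlt (not_lt.mpr ?_)
    calc |⟪x, n'⟫ - c| = |⟪x - y, n'⟫| := by rw [inner_sub_left, hy']
      _ ≤ ‖x - y‖ * ‖n'‖ := abs_real_inner_le_norm _ _
      _ = dist x y := by rw [hn', dist_eq_norm]; ring

lemma pearson_rayleigh_ge {k : ℕ} (A : Matrix (Fin k) (Fin k) ℝ) (hA : A.IsHermitian)
    (μ : ℝ)
    (hmin : ∀ (μ' : ℝ) (v : Fin k → ℝ), v ≠ 0 →
      (∀ i : Fin k, ∑ l, A i l * v l = μ' * v i) → μ ≤ μ')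
    (v : EuclideanSpace ℝ (Fin k)) (hv : ‖v‖ = 1) :
    μ ≤ ∑ i, v i * (A.mulVec v i) := by
  set b := hA.eigenvectorBasis with hb
  have key : ∀ i, μ ≤ hA.eigenvalues i := by
    intro i
    apply hmin _ (b i)
    · intro h0
      have h1 := b.orthonormal.1 i
      rw [show (b i : EuclideanSpace ℝ (Fin k)) = 0 from (WithLp.ofLp_eq_zero (p := 2)).mp h0] at h1
      simp at h1
    · intro idx
      have h2 := congrFun (hA.mulVec_eigenvectorBasis i) idx
      simpa [Matrix.mulVec, dotProduct, mul_comm] using h2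
  set T := Matrix.toEuclideanLin A with hT
  have hTsym := Matrix.isHermitian_iff_isSymmetric.mp hA
  have hTb : ∀ i, T (b i) = hA.eigenvalues i • b i := by
    intro i
    apply (WithLp.equiv 2 (Fin k → ℝ)).injective
    simpa [hT, Matrix.ofLp_toEuclideanLin_apply] using hA.mulVec_eigenvectorBasis i
  have hexp : ∑ i, v i * (A.mulVec v i) = ⟪v, T v⟫ := by
    simp only [PiLp.inner_apply, RCLike.inner_apply, starRingEnd_apply, star_trivial]
    rw [hT]; simp only [Matrix.ofLp_toEuclideanLin_apply]
    exact Finset.sum_congr rfl fun _ _ => mul_comm _ _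
  rw [hexp, ← b.sum_inner_mul_inner v (T v)]
  have hterm : ∀ i, ⟪v, b i⟫ * ⟪b i, T v⟫ = hA.eigenvalues i * ⟪v, b i⟫ ^ 2 := by
    intro i
    have : ⟪b i, T v⟫ = hA.eigenvalues i * ⟪v, b i⟫ := by
      rw [← hTsym (b i) v, hTb, real_inner_smul_left, real_inner_comm]
    rw [this]; ring
  calc μ = μ * ∑ i, ⟪v, b i⟫ * ⟪b i, v⟫ := by
        rw [b.sum_inner_mul_inner v v, real_inner_self_eq_norm_sq, hv]; norm_num
    _ ≤ ∑ i, ⟪v, b i⟫ * ⟪b i, T v⟫ := by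
        rw [Finset.mul_sum]
        apply Finset.sum_le_sum
        intro i _
        rw [hterm i, real_inner_comm (b i) v, ← sq]
        exact mul_le_mul_of_nonneg_right (key i) (sq_nonneg _)

/-- Pearson's theorem on the hyperplane of best fit: the minimal hyperplanar moment
of inertia over all hyperplanes in ℝ^k equals the smallest eigenvalue `μ` of the
inertia matrix `J_{il} = ∑ⱼ mⱼ x_{ji} x_{jl}`, and it is attained by the hyperplane
through the origin (the center of masses) orthogonal to a corresponding eigenvector. -/
theorem pearson_best_fit_hyperplane
    (k N : ℕ) (M : Fin N → EuclideanSpace ℝ (Fin k)) (mass : Fin N → ℝ)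
    (hmass : ∀ j, 0 < mass j)
    (hcenter : ∀ i : Fin k, ∑ j, mass j * M j i = 0)
    (hpd : ∀ v : EuclideanSpace ℝ (Fin k), v ≠ 0 → 0 < ∑ j, mass j * ⟪M j, v⟫ ^ 2)
    (μ : ℝ) (n : EuclideanSpace ℝ (Fin k)) (hn : ‖n‖ = 1)
    (heig : ∀ i : Fin k, ∑ l, (∑ j, mass j * (M j i * M j l)) * n l = μ * n i)
    (hmin : ∀ (μ' : ℝ) (v : Fin k → ℝ), v ≠ 0 →
      (∀ i : Fin k, ∑ l, (∑ j, mass j * (M j i * M j l)) * v l = μ' * v i) → μ ≤ μ') :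
    (∑ j, mass j * (Metric.infDist (M j) {p : EuclideanSpace ℝ (Fin k) | ⟪p, n⟫ = 0}) ^ 2
        = μ) ∧
    ∀ (n' : EuclideanSpace ℝ (Fin k)) (c : ℝ), ‖n'‖ = 1 →
      μ ≤ ∑ j, mass j *
        (Metric.infDist (M j) {p : EuclideanSpace ℝ (Fin k) | ⟪p, n'⟫ = c}) ^ 2 := by
  classical
  set A : Matrix (Fin k) (Fin k) ℝ :=
    Matrix.of (fun i l => ∑ j, mass j * (M j i * M j l)) with hAdef
  have hAentry : ∀ i l, A i l = ∑ j, mass j * (M j i * M j l) := fun i l => rfl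
  have hAsym : A.IsHermitian := by
    ext i l
    simp only [Matrix.conjTranspose_apply, star_trivial, hAentry]
    refine Finset.sum_congr rfl fun j _ => by ring
  have hinner : ∀ (x v : EuclideanSpace ℝ (Fin k)), ⟪x, v⟫ = ∑ i, x i * v i := by
    intro x v
    simp [PiLp.inner_apply, RCLike.inner_apply]
    exact Finset.sum_congr rfl fun _ _ => mul_comm _ _
  have hQ : ∀ v : EuclideanSpace ℝ (Fin k),
      ∑ j, mass j * ⟪M j, v⟫ ^ 2 = ∑ i, v i * (A.mulVec v i) := by
    intro v
    calc ∑ j, mass j * ⟪M j, v⟫ ^ 2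
        = ∑ j, ∑ i, ∑ l, mass j * (M j i * M j l) * (v i * v l) := by
          refine Finset.sum_congr rfl fun j _ => ?_
          rw [hinner, sq, Finset.sum_mul_sum, Finset.mul_sum]
          refine Finset.sum_congr rfl fun i _ => ?_
          rw [Finset.mul_sum]
          refine Finset.sum_congr rfl fun l _ => by ring
      _ = ∑ i, ∑ l, ∑ j, mass j * (M j i * M j l) * (v i * v l) := by
          rw [Finset.sum_comm]
          exact Finset.sum_congr rfl fun i _ => Finset.sum_comm
      _ = ∑ i, v i * (A.mulVec v i) := by
          refine Finset.sum_congr rfl fun i _ => ?_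
          simp only [Matrix.mulVec, dotProduct, hAentry]
          rw [Finset.mul_sum]
          refine Finset.sum_congr rfl fun l _ => ?_
          rw [Finset.sum_mul, Finset.mul_sum]
          exact Finset.sum_congr rfl fun j _ => by ring
  have hmulVec : ∀ i, A.mulVec n i = μ * n i := by
    intro i
    simpa [Matrix.mulVec, dotProduct, hAentry] using heig i
  have hnormn : ∑ i, n i * n i = 1 := by
    rw [← hinner n n, real_inner_self_eq_norm_sq, hn]; norm_num
  constructor
  · have h1 : ∀ j, Metric.infDist (M j) {p : EuclideanSpace ℝ (Fin k) | ⟪p, n⟫ = 0}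
        = |⟪M j, n⟫| := by
      intro j
      rw [pearson_infDist_hyperplane (M j) n 0 hn]
      simp
    calc ∑ j, mass j * (Metric.infDist (M j) {p : EuclideanSpace ℝ (Fin k) | ⟪p, n⟫ = 0}) ^ 2
        = ∑ j, mass j * ⟪M j, n⟫ ^ 2 := by
          refine Finset.sum_congr rfl fun j _ => ?_
          rw [h1 j, sq_abs]
      _ = ∑ i, n i * (A.mulVec n i) := hQ n
      _ = μ * ∑ i, n i * n i := by
          rw [Finset.mul_sum]
          refine Finset.sum_congr rfl fun i _ => ?_
          rw [hmulVec i]; ring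
      _ = μ := by rw [hnormn, mul_one]
  · intro n' c hn'
    have hray : μ ≤ ∑ j, mass j * ⟪M j, n'⟫ ^ 2 := by
      rw [hQ n']
      exact pearson_rayleigh_ge A hAsym μ (by simpa [hAentry] using hmin) n' hn'
    have hmid : ∑ j, mass j * ⟪M j, n'⟫ = 0 := by
      calc ∑ j, mass j * ⟪M j, n'⟫ = ∑ j, ∑ i, mass j * M j i * n' i := by
            refine Finset.sum_congr rfl fun j _ => ?_
            rw [hinner, Finset.mul_sum]
            exact Finset.sum_congr rfl fun i _ => by ring
        _ = ∑ i, (∑ j, mass j * M j i) * n' i := by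
            rw [Finset.sum_comm]
            exact Finset.sum_congr rfl fun i _ => (Finset.sum_mul _ _ _).symm
        _ = 0 := by
            refine Finset.sum_eq_zero fun i _ => ?_
            rw [hcenter i, zero_mul]
    have hsplit : ∑ j, mass j *
        (Metric.infDist (M j) {p : EuclideanSpace ℝ (Fin k) | ⟪p, n'⟫ = c}) ^ 2
        = ∑ j, mass j * ⟪M j, n'⟫ ^ 2 - 2 * c * ∑ j, mass j * ⟪M j, n'⟫
          + c ^ 2 * ∑ j, mass j := by
      rw [Finset.mul_sum, Finset.mul_sum, ← Finset.sum_sub_distrib, ← Finset.sum_add_distrib]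
      refine Finset.sum_congr rfl fun j _ => ?_
      rw [pearson_infDist_hyperplane (M j) n' c hn', sq_abs]
      ring
    rw [hsplit, hmid]
    have hc2 : 0 ≤ c ^ 2 * ∑ j, mass j :=
      mul_nonneg (sq_nonneg c) (Finset.sum_nonneg fun j _ => (hmass j).le)
    linarith
end

section
/- (Two confocal conics through a point) Let α > β > 0 and let P = (x_P, y_P) have x_P ≠ 0 and y_P ≠ 0. Then there exist exactly two real values λ₁ < β < λ₂ < α such that x_P²/(α − λ) + y_P²/(β − λ) = 1; the conic with parameter λ₁ is an ellipse and the one with parameter λ₂ is a hyperbola, and they intersect orthogonally at P (their gradients at P are orthogonal). -/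
/-- Through a point `P` with both coordinates nonzero there pass exactly two conics
of the confocal pencil `x²/(α-λ) + y²/(β-λ) = 1`: an ellipse (`λ₁ < β`) and a
hyperbola (`β < λ₂ < α`), and they intersect orthogonally at `P`. -/
theorem two_confocal_conics_through_point
    (α β xP yP : ℝ) (hβ : 0 < β) (hαβ : β < α) (hx : xP ≠ 0) (hy : yP ≠ 0) :
    ∃ lam₁ lam₂ : ℝ,
      lam₁ < β ∧ β < lam₂ ∧ lam₂ < α ∧
      xP ^ 2 / (α - lam₁) + yP ^ 2 / (β - lam₁) = 1 ∧
      xP ^ 2 / (α - lam₂) + yP ^ 2 / (β - lam₂) = 1 ∧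
      (∀ lam : ℝ, lam ≠ α → lam ≠ β →
        xP ^ 2 / (α - lam) + yP ^ 2 / (β - lam) = 1 → lam = lam₁ ∨ lam = lam₂) ∧
      (2 * xP / (α - lam₁)) * (2 * xP / (α - lam₂)) +
        (2 * yP / (β - lam₁)) * (2 * yP / (β - lam₂)) = 0 := by
  have hx2 : 0 < xP ^ 2 := by positivity
  have hy2 : 0 < yP ^ 2 := by positivity
  obtain ⟨s, hs⟩ : ∃ s : ℝ, s = α + β - xP ^ 2 - yP ^ 2 := ⟨_, rfl⟩
  obtain ⟨p, hp⟩ : ∃ p : ℝ, p = α * β - xP ^ 2 * β - yP ^ 2 * α := ⟨_, rfl⟩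
  obtain ⟨D, hD⟩ : ∃ D : ℝ, D = s ^ 2 - 4 * p := ⟨_, rfl⟩
  have hDβ : (2 * β - s) ^ 2 < D := by
    have h1 : D - (2 * β - s) ^ 2 = 4 * yP ^ 2 * (α - β) := by
      rw [hD, hs, hp]; ring
    nlinarith [mul_pos hy2 (sub_pos.mpr hαβ)]
  have hDα : D < (2 * α - s) ^ 2 := by
    have h1 : (2 * α - s) ^ 2 - D = 4 * xP ^ 2 * (α - β) := by
      rw [hD, hs, hp]; ring
    nlinarith [mul_pos hx2 (sub_pos.mpr hαβ)]
  have hD0 : 0 ≤ D := le_trans (sq_nonneg _) hDβ.le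
  obtain ⟨r, hr⟩ : ∃ r : ℝ, r = Real.sqrt D := ⟨_, rfl⟩
  have hsq : r ^ 2 = s ^ 2 - 4 * p := by rw [hr, Real.sq_sqrt hD0, hD]
  have hr0 : 0 ≤ r := hr ▸ Real.sqrt_nonneg _
  have hrβ1 : 2 * β - s < r := by nlinarith
  have hrβ2 : s - 2 * β < r := by nlinarith
  have hrα : r < 2 * α - s := by nlinarith
  obtain ⟨l1, hl1⟩ : ∃ l : ℝ, l = (s - r) / 2 := ⟨_, rfl⟩
  obtain ⟨l2, hl2⟩ : ∃ l : ℝ, l = (s + r) / 2 := ⟨_, rfl⟩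
  have h1β : l1 < β := by rw [hl1]; linarith
  have hβ2 : β < l2 := by rw [hl2]; linarith
  have h2α : l2 < α := by rw [hl2]; linarith
  have hroot1 : l1 ^ 2 - s * l1 + p = 0 := by
    rw [hl1]; linear_combination (1 : ℝ)/4 * hsq
  have hroot2 : l2 ^ 2 - s * l2 + p = 0 := by
    rw [hl2]; linear_combination (1 : ℝ)/4 * hsq
  have vieta_sum : l1 + l2 = s := by rw [hl1, hl2]; ring
  have vieta_prod : l1 * l2 = p := by
    rw [hl1, hl2]; linear_combination (-1 : ℝ)/4 * hsq
  have key : ∀ l : ℝ, l ^ 2 - s * l + p = 0 → α - l ≠ 0 → β - l ≠ 0 →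
      xP ^ 2 / (α - l) + yP ^ 2 / (β - l) = 1 := by
    intro l hroot hαl hβl
    field_simp
    linear_combination (-1 : ℝ) * hroot - l * hs + hp
  have hα1 : α - l1 ≠ 0 := by intro h; have := sub_eq_zero.mp h; linarith
  have hα2 : α - l2 ≠ 0 := by intro h; have := sub_eq_zero.mp h; linarith
  have hβ1 : β - l1 ≠ 0 := by intro h; have := sub_eq_zero.mp h; linarith
  have hβ2' : β - l2 ≠ 0 := by intro h; have := sub_eq_zero.mp h; linarith
  refine ⟨l1, l2, h1β, hβ2, h2α, key l1 hroot1 hα1 hβ1, key l2 hroot2 hα2 hβ2', ?_, ?_⟩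
  · intro lam hα hβ' heq
    have hαl : α - lam ≠ 0 := fun h => hα (by linarith [sub_eq_zero.mp h])
    have hβl : β - lam ≠ 0 := fun h => hβ' (by linarith [sub_eq_zero.mp h])
    have hq : (lam - l1) * (lam - l2) = 0 := by
      field_simp at heq
      linear_combination (-1 : ℝ) * heq - lam * vieta_sum + vieta_prod - lam * hs + hp
    rcases mul_eq_zero.mp hq with h | h
    · exact Or.inl (by linarith [sub_eq_zero.mp h])
    · exact Or.inr (by linarith [sub_eq_zero.mp h])
  · have e1 : (α - l1) * (α - l2) = xP ^ 2 * (α - β) := by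
      linear_combination (-α) * vieta_sum + vieta_prod - α * hs + hp
    have e2 : (β - l1) * (β - l2) = -(yP ^ 2 * (α - β)) := by
      linear_combination (-β) * vieta_sum + vieta_prod - β * hs + hp
    field_simp
    linear_combination 4 * xP ^ 2 * e2 + 4 * yP ^ 2 * e1
end

section
/- (ℓ-planar best fit) Let points in ℝ^k with positive masses have center of masses at the origin and diagonal hyperplanar inertia operator with principal hyperplanar moments 0 < J₁ < J₂ < … < J_k (Jᵢ = Σⱼ mⱼ x_{ji}², cross terms zero). For 1 ≤ ℓ ≤ k−1, the minimum over all ℓ-dimensional affine subspaces π of the ℓ-planar moment J_π = Σⱼ mⱼ dist(Mⱼ, π)² equals J₁ + J₂ + … + J_{k−ℓ}, attained by the coordinate subspace through the origin spanned by the last ℓ standard basis vectors e_{k−ℓ+1},…,e_k. -/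
open scoped BigOperators RealInnerProductSpace

lemma my_le_infDist {α : Type*} [MetricSpace α] {s : Set α} {x : α} {b : ℝ}
    (hs : s.Nonempty) (h : ∀ y ∈ s, b ≤ dist x y) : b ≤ Metric.infDist x s := by
  by_contra hlt
  push_neg at hlt
  obtain ⟨y, hy, hd⟩ := (Metric.infDist_lt_iff hs).mp hlt
  exact absurd (h y hy) (not_le.mpr hd)

lemma my_rearrange {k m : ℕ} (hm1 : 1 ≤ m) (hmk : m ≤ k) (J c : Fin k → ℝ)
    (hmono : Monotone J) (hc0 : ∀ p, 0 ≤ c p) (hc1 : ∀ p, c p ≤ 1)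
    (hsum : ∑ p, c p = (m : ℝ)) :
    ∑ p ∈ Finset.univ.filter (fun p : Fin k => p.val < m), J p ≤ ∑ p, c p * J p := by
  classical
  set d : Fin k → ℝ := fun p => if p.val < m then (1 : ℝ) else 0 with hd
  have hcard : (Finset.univ.filter (fun p : Fin k => p.val < m)).card = m := by
    have : (Finset.univ.filter (fun p : Fin k => p.val < m))
        = Finset.map (Fin.castLEEmb hmk) Finset.univ := by
      ext p
      simp only [Finset.mem_filter, Finset.mem_univ, true_and, Finset.mem_map,
        Fin.castLEEmb, Function.Embedding.coeFn_mk]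
      constructor
      · intro h
        exact ⟨⟨p.val, h⟩, Fin.ext rfl⟩
      · rintro ⟨a, rfl⟩
        simpa using a.isLt
    rw [this, Finset.card_map, Finset.card_univ, Fintype.card_fin]
  have hdsum : ∑ p, d p = (m : ℝ) := by
    rw [hd, Finset.sum_boole, hcard]
  have hfilter : ∑ p ∈ Finset.univ.filter (fun p : Fin k => p.val < m), J p = ∑ p, d p * J p := by
    rw [Finset.sum_filter]
    refine Finset.sum_congr rfl fun p _ => ?_
    by_cases h : p.val < m <;> simp [hd, h]
  rw [hfilter]
  have key : 0 ≤ ∑ p, (c p - d p) * J p := by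
    set t : ℝ := J ⟨m - 1, by omega⟩ with ht
    have step : ∑ p, (c p - d p) * t ≤ ∑ p, (c p - d p) * J p := by
      refine Finset.sum_le_sum fun p _ => ?_
      by_cases h : p.val < m
      · have hJp : J p ≤ t := hmono (by simp [Fin.le_def]; omega)
        have : c p - d p ≤ 0 := by simp [hd, h]; linarith [hc1 p]
        exact mul_le_mul_of_nonpos_left hJp this
      · have hJp : t ≤ J p := hmono (by simp [Fin.le_def]; omega)
        have : 0 ≤ c p - d p := by simp [hd, h]; linarith [hc0 p]
        exact mul_le_mul_of_nonneg_left hJp this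
    have : ∑ p, (c p - d p) * t = 0 := by
      rw [← Finset.sum_mul, Finset.sum_sub_distrib, hsum, hdsum]
      ring
    linarith
  have : ∑ p, (c p - d p) * J p = ∑ p, c p * J p - ∑ p, d p * J p := by
    rw [← Finset.sum_sub_distrib]
    exact Finset.sum_congr rfl fun p _ => by ring
  linarith

lemma my_diag {k N : ℕ} (M : Fin N → EuclideanSpace ℝ (Fin k)) (mass : Fin N → ℝ)
    (hprin : ∀ i l : Fin k, i ≠ l → ∑ j, mass j * (M j i * M j l) = 0)
    (J : Fin k → ℝ) (hJ : ∀ i, J i = ∑ j, mass j * (M j i) ^ 2)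
    (u : Fin k → ℝ) :
    ∑ j, mass j * (∑ p, u p * M j p) ^ 2 = ∑ p, (u p) ^ 2 * J p := by
  classical
  have expand : ∀ j, mass j * (∑ p, u p * M j p) ^ 2
      = ∑ p, ∑ q, (u p * u q) * (mass j * (M j p * M j q)) := by
    intro j
    rw [sq, Finset.sum_mul_sum, Finset.mul_sum]
    refine Finset.sum_congr rfl fun p _ => ?_
    rw [Finset.mul_sum]
    exact Finset.sum_congr rfl fun q _ => by ring
  calc ∑ j, mass j * (∑ p, u p * M j p) ^ 2
      = ∑ j, ∑ p, ∑ q, (u p * u q) * (mass j * (M j p * M j q)) :=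
        Finset.sum_congr rfl fun j _ => expand j
    _ = ∑ p, ∑ q, (u p * u q) * ∑ j, mass j * (M j p * M j q) := by
        rw [Finset.sum_comm]
        refine Finset.sum_congr rfl fun p _ => ?_
        rw [Finset.sum_comm]
        refine Finset.sum_congr rfl fun q _ => ?_
        rw [Finset.mul_sum]
    _ = ∑ p, (u p) ^ 2 * J p := by
        refine Finset.sum_congr rfl fun p _ => ?_
        rw [Finset.sum_eq_single p]
        · rw [hJ, Finset.mul_sum, Finset.mul_sum]
          exact Finset.sum_congr rfl fun j _ => by ring
        · intro q _ hq
          rw [hprin p q fun h => hq h.symm, mul_zero]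
        · intro h
          exact absurd (Finset.mem_univ p) h

lemma my_shift {N : ℕ} (mass : Fin N → ℝ) (hmass : ∀ j, 0 ≤ mass j)
    (a : Fin N → ℝ) (c : ℝ) (h0 : ∑ j, mass j * a j = 0) :
    ∑ j, mass j * (a j) ^ 2 ≤ ∑ j, mass j * (a j - c) ^ 2 := by
  have h1 : ∑ j, mass j * (a j - c) ^ 2
      = ∑ j, mass j * (a j) ^ 2 - (2 * c) * ∑ j, mass j * a j + c ^ 2 * ∑ j, mass j := by
    rw [Finset.mul_sum, Finset.mul_sum, ← Finset.sum_sub_distrib, ← Finset.sum_add_distrib]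
    exact Finset.sum_congr rfl fun j _ => by ring
  have h2 : 0 ≤ c ^ 2 * ∑ j, mass j := by
    apply mul_nonneg (sq_nonneg c)
    exact Finset.sum_nonneg fun j _ => hmass j
  rw [h1, h0]
  linarith

lemma my_W_dist {k m : ℕ} (W : Submodule ℝ (EuclideanSpace ℝ (Fin k)))
    (hW : W = Submodule.span ℝ
      {v : EuclideanSpace ℝ (Fin k) |
        ∃ i : Fin k, m ≤ i.val ∧ v = EuclideanSpace.single i (1 : ℝ)})
    (x : EuclideanSpace ℝ (Fin k)) :
    (Metric.infDist x (W : Set (EuclideanSpace ℝ (Fin k)))) ^ 2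
      = ∑ i ∈ Finset.univ.filter (fun i : Fin k => i.val < m), (x i) ^ 2 := by
  classical
  set c : ℝ := ∑ i ∈ Finset.univ.filter (fun i : Fin k => i.val < m), (x i) ^ 2 with hc
  have hc0 : 0 ≤ c := Finset.sum_nonneg fun i _ => sq_nonneg _
  -- every element of W vanishes on coordinates < m
  have hzero : ∀ y ∈ W, ∀ i : Fin k, i.val < m → y i = 0 := by
    intro y hy
    rw [hW] at hy
    induction hy using Submodule.span_induction with
    | mem v hv =>
      obtain ⟨i, him, rfl⟩ := hv
      intro i' hi'
      have hne : i' ≠ i := by intro h; rw [h] at hi'; omega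
      simp [EuclideanSpace.single_apply, hne]
    | zero => intro i _; rfl
    | add a b _ _ ha hb =>
      intro i hi
      have : (a + b) i = a i + b i := rfl
      rw [this, ha i hi, hb i hi, add_zero]
    | smul r a _ ha =>
      intro i hi
      have : (r • a) i = r * a i := rfl
      rw [this, ha i hi, mul_zero]
  -- the truncation
  set t : EuclideanSpace ℝ (Fin k) :=
    ∑ i ∈ Finset.univ.filter (fun i : Fin k => m ≤ i.val),
      x i • EuclideanSpace.single i (1 : ℝ) with hT
  have htmem : t ∈ W := by
    apply Submodule.sum_mem
    intro i hi
    apply Submodule.smul_mem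
    rw [hW]
    exact Submodule.subset_span ⟨i, (Finset.mem_filter.mp hi).2, rfl⟩
  have htapply : ∀ i' : Fin k, t i' = if m ≤ i'.val then x i' else 0 := by
    intro i'
    rw [hT]
    have : (∑ i ∈ Finset.univ.filter (fun i : Fin k => m ≤ i.val),
        x i • EuclideanSpace.single i (1 : ℝ)) i'
        = ∑ i ∈ Finset.univ.filter (fun i : Fin k => m ≤ i.val),
            (x i • EuclideanSpace.single i (1 : ℝ)) i' := by
      rw [WithLp.ofLp_sum]
      exact Finset.sum_apply i' _ _
    rw [this]
    simp only [PiLp.smul_apply, EuclideanSpace.single_apply, smul_eq_mul, mul_ite, mul_one,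
      mul_zero]
    rw [Finset.sum_ite_eq]
    simp [Finset.mem_filter]
  -- distance squared formula
  have hdist2 : ∀ y : EuclideanSpace ℝ (Fin k),
      dist x y ^ 2 = ∑ i, (x i - y i) ^ 2 := by
    intro y
    rw [EuclideanSpace.dist_eq, Real.sq_sqrt (Finset.sum_nonneg fun i _ => sq_nonneg _)]
    exact Finset.sum_congr rfl fun i _ => by rw [Real.dist_eq, sq_abs]
  have hdxt : dist x t ^ 2 = c := by
    rw [hdist2]
    rw [← Finset.sum_filter_add_sum_filter_not Finset.univ (fun i : Fin k => i.val < m)]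
    have h1 : ∑ i ∈ Finset.univ.filter (fun i : Fin k => i.val < m), (x i - t i) ^ 2 = c := by
      refine Finset.sum_congr rfl fun i hi => ?_
      have := (Finset.mem_filter.mp hi).2
      rw [htapply i, if_neg (by omega), sub_zero]
    have h2 : ∑ i ∈ Finset.univ.filter (fun i : Fin k => ¬ i.val < m), (x i - t i) ^ 2 = 0 := by
      refine Finset.sum_eq_zero fun i hi => ?_
      have := (Finset.mem_filter.mp hi).2
      rw [htapply i, if_pos (by omega), sub_self]
      exact zero_pow (by norm_num)
    rw [h1, h2, add_zero]
  have hlow : Real.sqrt c ≤ Metric.infDist x (W : Set (EuclideanSpace ℝ (Fin k))) := by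
    apply my_le_infDist ⟨0, W.zero_mem⟩
    intro y hy
    rw [← Real.sqrt_sq dist_nonneg]
    apply Real.sqrt_le_sqrt
    rw [hdist2]
    rw [← Finset.sum_filter_add_sum_filter_not Finset.univ (fun i : Fin k => i.val < m)]
    have h1 : c ≤ ∑ i ∈ Finset.univ.filter (fun i : Fin k => i.val < m), (x i - y i) ^ 2 := by
      rw [hc]
      refine le_of_eq (Finset.sum_congr rfl fun i hi => ?_)
      rw [hzero y hy i (Finset.mem_filter.mp hi).2, sub_zero]
    have h2 : 0 ≤ ∑ i ∈ Finset.univ.filter (fun i : Fin k => ¬ i.val < m), (x i - y i) ^ 2 :=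
      Finset.sum_nonneg fun i _ => sq_nonneg _
    linarith
  have hup : Metric.infDist x (W : Set (EuclideanSpace ℝ (Fin k))) ≤ Real.sqrt c := by
    have := Metric.infDist_le_dist_of_mem (x := x) htmem
    have heq : dist x t = Real.sqrt c := by
      rw [← hdxt, Real.sqrt_sq dist_nonneg]
    rwa [heq] at this
  have : Metric.infDist x (W : Set (EuclideanSpace ℝ (Fin k))) = Real.sqrt c :=
    le_antisymm hup hlow
  rw [this, Real.sq_sqrt hc0]

lemma my_inner_eq {k : ℕ} (v w : EuclideanSpace ℝ (Fin k)) :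
    ⟪v, w⟫ = ∑ i, v i * w i := by
  simp [PiLp.inner_apply, RCLike.inner_apply, conj_trivial]
  exact Finset.sum_congr rfl fun i _ => mul_comm _ _

lemma my_lower {k N ℓ : ℕ} (hℓ : 1 ≤ ℓ) (hℓk : ℓ ≤ k - 1)
    (M : Fin N → EuclideanSpace ℝ (Fin k)) (mass : Fin N → ℝ)
    (hmass : ∀ j, 0 < mass j)
    (hcenter : ∀ i : Fin k, ∑ j, mass j * M j i = 0)
    (hprin : ∀ i l : Fin k, i ≠ l → ∑ j, mass j * (M j i * M j l) = 0)
    (J : Fin k → ℝ) (hJ : ∀ i, J i = ∑ j, mass j * (M j i) ^ 2)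
    (hJmono : StrictMono J)
    (π : AffineSubspace ℝ (EuclideanSpace ℝ (Fin k)))
    (hne : (π : Set (EuclideanSpace ℝ (Fin k))).Nonempty)
    (hdim : Module.finrank ℝ π.direction = ℓ) :
    (∑ i ∈ Finset.univ.filter (fun i : Fin k => i.val < k - ℓ), J i) ≤
      ∑ j, mass j * (Metric.infDist (M j) (π : Set (EuclideanSpace ℝ (Fin k)))) ^ 2 := by
  classical
  obtain ⟨q, hq⟩ := hne
  set V := π.direction with hV
  have hk2 : 2 ≤ k := by omega
  have hfin : Module.finrank ℝ Vᗮ = k - ℓ := by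
    have h := Submodule.finrank_add_finrank_orthogonal (K := V)
    rw [finrank_euclideanSpace_fin, hdim] at h
    omega
  set U := Vᗮ with hU
  set m := Module.finrank ℝ U with hm
  set b := stdOrthonormalBasis ℝ U with hb
  set u : Fin m → EuclideanSpace ℝ (Fin k) := fun s => ((b s : U) : EuclideanSpace ℝ (Fin k))
    with hu
  have hon : Orthonormal ℝ u := by
    rw [orthonormal_iff_ite]
    intro i j
    rw [hu]
    simp only
    rw [← Submodule.coe_inner]
    exact orthonormal_iff_ite.mp b.orthonormal i j
  have humem : ∀ s, u s ∈ U := fun s => (b s).2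
  -- the weights
  set cw : Fin k → ℝ := fun p => ∑ s, (u s p) ^ 2 with hcw
  have hcw0 : ∀ p, 0 ≤ cw p := fun p => Finset.sum_nonneg fun s _ => sq_nonneg _
  have hcw1 : ∀ p, cw p ≤ 1 := by
    intro p
    have hb2 := hon.sum_inner_products_le (EuclideanSpace.single p (1 : ℝ)) (s := Finset.univ)
    have heval : ∀ s, ⟪u s, EuclideanSpace.single p (1 : ℝ)⟫ = u s p := by
      intro s
      rw [my_inner_eq]
      simp [EuclideanSpace.single_apply]
    have hnorm : ‖EuclideanSpace.single p (1 : ℝ)‖ = 1 := by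
      rw [EuclideanSpace.norm_single]; norm_num
    calc cw p = ∑ s, ‖⟪u s, EuclideanSpace.single p (1 : ℝ)⟫‖ ^ 2 := by
          refine Finset.sum_congr rfl fun s _ => ?_
          rw [heval s, Real.norm_eq_abs, sq_abs]
      _ ≤ ‖EuclideanSpace.single p (1 : ℝ)‖ ^ 2 := hb2
      _ = 1 := by rw [hnorm]; norm_num
  have hcwsum : ∑ p, cw p = ((k - ℓ : ℕ) : ℝ) := by
    have : ∑ p, cw p = ∑ s : Fin m, ∑ p, (u s p) ^ 2 := Finset.sum_comm
    rw [this]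
    have hone : ∀ s : Fin m, ∑ p, (u s p) ^ 2 = 1 := by
      intro s
      have h1 : ⟪u s, u s⟫ = ∑ p, u s p * u s p := my_inner_eq _ _
      have h2 : ⟪u s, u s⟫ = ‖u s‖ ^ 2 := real_inner_self_eq_norm_sq _
      have h3 : ‖u s‖ = 1 := hon.1 s
      have : ∑ p, u s p * u s p = 1 := by rw [← h1, h2, h3]; norm_num
      rw [← this]
      exact Finset.sum_congr rfl fun p _ => sq (u s p)
    rw [Finset.sum_congr rfl fun s _ => hone s, Finset.sum_const, Finset.card_univ,
      Fintype.card_fin, nsmul_eq_mul, mul_one]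
    exact_mod_cast hfin
  -- the key pointwise bound
  have key : ∀ j : Fin N,
      ∑ s, ((∑ p, u s p * M j p) - (∑ p, u s p * q p)) ^ 2
        ≤ (Metric.infDist (M j) (π : Set (EuclideanSpace ℝ (Fin k)))) ^ 2 := by
    intro j
    set cval : ℝ := ∑ s, ((∑ p, u s p * M j p) - (∑ p, u s p * q p)) ^ 2 with hcv
    have hc0 : 0 ≤ cval := Finset.sum_nonneg fun s _ => sq_nonneg _
    have hle : ∀ y ∈ (π : Set (EuclideanSpace ℝ (Fin k))), Real.sqrt cval ≤ dist (M j) y := by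
      intro y hy
      have hinner : ∀ s, (∑ p, u s p * M j p) - (∑ p, u s p * q p) = ⟪u s, M j - y⟫ := by
        intro s
        have hyq : (⟪u s, y - q⟫ : ℝ) = 0 := by
          have hmem : y - q ∈ V := by
            have := AffineSubspace.vsub_mem_direction hy hq
            simpa [vsub_eq_sub] using this
          have horth : ∀ w ∈ V, ⟪w, u s⟫ = 0 := (Submodule.mem_orthogonal V (u s)).mp (humem s)
          rw [real_inner_comm]
          exact horth _ hmem
        have h1 : (⟪u s, M j - y⟫ : ℝ) = ⟪u s, M j⟫ - ⟪u s, q⟫ - ⟪u s, y - q⟫ := by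
          rw [inner_sub_right, inner_sub_right]
          ring
        rw [h1, hyq, my_inner_eq, my_inner_eq]
        ring
      have hbessel : cval ≤ ‖M j - y‖ ^ 2 := by
        calc cval = ∑ s, ‖(⟪u s, M j - y⟫ : ℝ)‖ ^ 2 := by
              refine Finset.sum_congr rfl fun s _ => ?_
              rw [← hinner s, Real.norm_eq_abs, sq_abs]
          _ ≤ ‖M j - y‖ ^ 2 := hon.sum_inner_products_le _
      rw [← Real.sqrt_sq dist_nonneg]
      apply Real.sqrt_le_sqrt
      rw [dist_eq_norm]
      exact hbessel
    have h2 := my_le_infDist ⟨q, hq⟩ hle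
    calc cval = Real.sqrt cval ^ 2 := (Real.sq_sqrt hc0).symm
      _ ≤ (Metric.infDist (M j) (π : Set (EuclideanSpace ℝ (Fin k)))) ^ 2 :=
          pow_le_pow_left₀ (Real.sqrt_nonneg _) h2 2
  -- the center-of-mass cancellation
  have hcent : ∀ s : Fin m, ∑ j, mass j * (∑ p, u s p * M j p) = 0 := by
    intro s
    have h1 : ∑ j, mass j * (∑ p, u s p * M j p)
        = ∑ j, ∑ p, u s p * (mass j * M j p) := by
      refine Finset.sum_congr rfl fun j _ => ?_
      rw [Finset.mul_sum]
      exact Finset.sum_congr rfl fun p _ => by ring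
    rw [h1, Finset.sum_comm]
    refine Finset.sum_eq_zero fun p _ => ?_
    rw [← Finset.mul_sum, hcenter p, mul_zero]
  -- assemble
  calc ∑ i ∈ Finset.univ.filter (fun i : Fin k => i.val < k - ℓ), J i
      ≤ ∑ p, cw p * J p :=
        my_rearrange (by omega) (by omega) J cw hJmono.monotone hcw0 hcw1 hcwsum
    _ = ∑ s : Fin m, ∑ j, mass j * (∑ p, u s p * M j p) ^ 2 := by
        have h1 : ∑ p, cw p * J p = ∑ s : Fin m, ∑ p, (u s p) ^ 2 * J p := by
          rw [← Finset.sum_comm]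
          refine Finset.sum_congr rfl fun p _ => ?_
          rw [hcw]
          simp only
          rw [Finset.sum_mul]
        rw [h1]
        exact Finset.sum_congr rfl fun s _ => (my_diag M mass hprin J hJ (fun p => u s p)).symm
    _ ≤ ∑ s : Fin m, ∑ j, mass j * ((∑ p, u s p * M j p) - (∑ p, u s p * q p)) ^ 2 :=
        Finset.sum_le_sum fun s _ =>
          my_shift mass (fun j => (hmass j).le) (fun j => ∑ p, u s p * M j p)
            (∑ p, u s p * q p) (hcent s)
    _ = ∑ j, mass j * ∑ s : Fin m, ((∑ p, u s p * M j p) - (∑ p, u s p * q p)) ^ 2 := by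
        rw [Finset.sum_comm]
        exact Finset.sum_congr rfl fun j _ => (Finset.mul_sum _ _ _).symm
    _ ≤ ∑ j, mass j * (Metric.infDist (M j) (π : Set (EuclideanSpace ℝ (Fin k)))) ^ 2 :=
        Finset.sum_le_sum fun j _ => mul_le_mul_of_nonneg_left (key j) (hmass j).le

/-- ℓ-planar best fit: in principal central coordinates with hyperplanar moments
`0 < J₁ < … < J_k`, the minimum over all ℓ-dimensional affine subspaces `π` of the
ℓ-planar moment `∑ⱼ mⱼ dist(Mⱼ, π)²` equals `J₁ + … + J_{k-ℓ}`, attained by the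
coordinate subspace through the origin spanned by the last `ℓ` basis vectors. -/
theorem ell_planar_best_fit
    (k N ℓ : ℕ) (hℓ : 1 ≤ ℓ) (hℓk : ℓ ≤ k - 1)
    (M : Fin N → EuclideanSpace ℝ (Fin k)) (mass : Fin N → ℝ)
    (hmass : ∀ j, 0 < mass j)
    (hcenter : ∀ i : Fin k, ∑ j, mass j * M j i = 0)
    (hprin : ∀ i l : Fin k, i ≠ l → ∑ j, mass j * (M j i * M j l) = 0)
    (J : Fin k → ℝ) (hJ : ∀ i, J i = ∑ j, mass j * (M j i) ^ 2)
    (hJpos : ∀ i, 0 < J i) (hJmono : StrictMono J)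
    (W : Submodule ℝ (EuclideanSpace ℝ (Fin k)))
    (hW : W = Submodule.span ℝ
      {v : EuclideanSpace ℝ (Fin k) |
        ∃ i : Fin k, k - ℓ ≤ i.val ∧ v = EuclideanSpace.single i (1 : ℝ)}) :
    (∑ j, mass j * (Metric.infDist (M j) (W : Set (EuclideanSpace ℝ (Fin k)))) ^ 2 =
        ∑ i ∈ Finset.univ.filter (fun i : Fin k => i.val < k - ℓ), J i) ∧
    ∀ π : AffineSubspace ℝ (EuclideanSpace ℝ (Fin k)),
      (π : Set (EuclideanSpace ℝ (Fin k))).Nonempty →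
      Module.finrank ℝ π.direction = ℓ →
      (∑ i ∈ Finset.univ.filter (fun i : Fin k => i.val < k - ℓ), J i) ≤
        ∑ j, mass j * (Metric.infDist (M j) (π : Set (EuclideanSpace ℝ (Fin k)))) ^ 2 := by
  constructor
  · calc ∑ j, mass j * (Metric.infDist (M j) (W : Set (EuclideanSpace ℝ (Fin k)))) ^ 2
        = ∑ j, mass j * ∑ i ∈ Finset.univ.filter (fun i : Fin k => i.val < k - ℓ), (M j i) ^ 2 :=
          Finset.sum_congr rfl fun j _ => by rw [my_W_dist W hW (M j)]
      _ = ∑ j, ∑ i ∈ Finset.univ.filter (fun i : Fin k => i.val < k - ℓ),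
            mass j * (M j i) ^ 2 :=
          Finset.sum_congr rfl fun j _ => Finset.mul_sum _ _ _
      _ = ∑ i ∈ Finset.univ.filter (fun i : Fin k => i.val < k - ℓ), ∑ j, mass j * (M j i) ^ 2 :=
          Finset.sum_comm
      _ = ∑ i ∈ Finset.univ.filter (fun i : Fin k => i.val < k - ℓ), J i :=
          Finset.sum_congr rfl fun i _ => (hJ i).symm
  · intro π hne hdim
    exact my_lower hℓ hℓk M mass hmass hcenter hprin J hJ hJmono π hne hdim
end
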